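/- Let $p_1, p_2, p_3$ be pairwise coprime positive integers $\ge 2$ and $h = p_1p_2p_3$. Then in $\mathbb{Q}(\lambda)$ one has the identity $\prod_{j=1}^{\mu}(\lambda - e^{2\pi i m_j/h}) = \frac{(\lambda^{h}-1)(\lambda^{p_1}-1)(\lambda^{p_2}-1)(\lambda^{p_3}-1)}{(\lambda^{p_1p_2}-1)(\lambda^{p_2p_3}-1)(\lambda^{p_3p_1}-1)(\lambda-1)}$, where $m_1,\dots,m_\mu$ are the exponents of the regular weight system $W = (p_2p_3, p_3p_1, p_1p_2; h)$ (i.e. $\chi_W(T) = \sum_j T^{m_j}$). In particular the right-hand side is a polynomial in $\lambda$. -/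

import Mathlib

open scoped BigOperators

/-- `χ_W(T) = T^{ε_W} ∏ᵢ (1 - T^{h - aᵢ})/(1 - T^{aᵢ})` for a weight system. -/
noncomputable def chiW (n : ℕ) (a : Fin n → ℕ) (h : ℕ) : RatFunc ℚ :=
  (RatFunc.X : RatFunc ℚ) ^ ((∑ i, (a i : ℤ)) - (h : ℤ)) *
    ∏ i, (1 - (RatFunc.X : RatFunc ℚ) ^ (h - a i)) / (1 - (RatFunc.X : RatFunc ℚ) ^ (a i))

lemma geom_div {F : Type*} [Field F] {a : ℕ} (ha : a ≠ 0) (n : ℕ) :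
    (1 - (RatFunc.X : RatFunc F) ^ (a * n)) / (1 - (RatFunc.X : RatFunc F) ^ a)
      = ∑ k ∈ Finset.range n, ((RatFunc.X : RatFunc F) ^ a) ^ k := by
  have hx : (1 - (RatFunc.X : RatFunc F) ^ a) ≠ 0 := by
    rw [sub_ne_zero]
    intro hcon
    have h1 : (algebraMap (Polynomial F) (RatFunc F)) (Polynomial.X ^ a)
        = algebraMap (Polynomial F) (RatFunc F) 1 := by
      simpa [map_pow, RatFunc.algebraMap_X] using hcon.symm
    have h2 := RatFunc.algebraMap_injective F h1
    have := congrArg Polynomial.natDegree h2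
    simp [Polynomial.natDegree_X_pow] at this
    exact ha this
  rw [pow_mul, eq_comm, eq_div_iff hx]
  linear_combination (-1 : RatFunc F) * geom_sum_mul ((RatFunc.X : RatFunc F) ^ a) n

lemma coeff_sum_X_pow (U : Multiset ℕ) (n : ℕ) :
    ((U.map fun c => (Polynomial.X : Polynomial ℚ) ^ c).sum).coeff n = (U.count n : ℚ) := by
  induction U using Multiset.induction_on with
  | empty => simp
  | cons a U ih =>
    simp only [Multiset.map_cons, Multiset.sum_cons, Polynomial.coeff_add, ih,
      Polynomial.coeff_X_pow, Multiset.count_cons]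
    by_cases h : a = n <;> simp [h, eq_comm] <;> push_cast <;> ring

lemma multiset_nat_eq {S T : Multiset ℕ}
    (h : (S.map fun c => (Polynomial.X : Polynomial ℚ) ^ c).sum
       = (T.map fun c => (Polynomial.X : Polynomial ℚ) ^ c).sum) : S = T := by
  ext n
  have := congrArg (fun p => Polynomial.coeff p n) h
  simp only [coeff_sum_X_pow] at this
  exact_mod_cast this

lemma multiset_int_eq {S T : Multiset ℤ}
    (h : (S.map fun n => (RatFunc.X : RatFunc ℚ) ^ n).sum
       = (T.map fun n => (RatFunc.X : RatFunc ℚ) ^ n).sum) : S = T := by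
  set N : ℕ := ((S + T).map Int.natAbs).sum with hN
  have hmem : ∀ n ∈ S + T, 0 ≤ n + (N : ℤ) := by
    intro n hn
    have h1 : n.natAbs ≤ N := by
      refine Multiset.single_le_sum (fun x _ => Nat.zero_le x) _ ?_
      exact Multiset.mem_map_of_mem _ hn
    omega
  have hXne : (RatFunc.X : RatFunc ℚ) ≠ 0 := RatFunc.X_ne_zero
  -- multiply both sides by X^N
  have h2 : ∀ (U : Multiset ℤ), (∀ n ∈ U, 0 ≤ n + (N : ℤ)) →
      (U.map fun n => (RatFunc.X : RatFunc ℚ) ^ n).sum * (RatFunc.X : RatFunc ℚ) ^ (N : ℤ)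
        = algebraMap (Polynomial ℚ) (RatFunc ℚ)
            (((U.map fun n => (n + (N : ℤ)).toNat).map
              fun c => (Polynomial.X : Polynomial ℚ) ^ c).sum) := by
    intro U hU
    rw [← Multiset.sum_map_mul_right, map_multiset_sum, Multiset.map_map, Multiset.map_map]
    refine congrArg Multiset.sum (Multiset.map_congr rfl fun n hn => ?_)
    simp only [Function.comp_apply, map_pow, RatFunc.algebraMap_X]
    rw [← zpow_natCast (RatFunc.X : RatFunc ℚ) ((n + (N:ℤ)).toNat),
      Int.toNat_of_nonneg (hU n hn), zpow_add₀ hXne]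
  have h3 := (h2 S (fun n hn => hmem n (Multiset.mem_add.mpr (Or.inl hn)))).symm.trans
    ((congrArg (· * (RatFunc.X : RatFunc ℚ) ^ (N : ℤ)) h).trans
      (h2 T (fun n hn => hmem n (Multiset.mem_add.mpr (Or.inr hn)))))
  have h4 := multiset_nat_eq (RatFunc.algebraMap_injective ℚ h3)
  have h5 : ∀ (U : Multiset ℤ), (∀ n ∈ U, 0 ≤ n + (N : ℤ)) →
      (U.map fun n => (n + (N : ℤ)).toNat).map (fun c : ℕ => (c : ℤ) - (N : ℤ)) = U := by
    intro U hU
    rw [Multiset.map_map]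
    refine (Multiset.map_congr rfl fun n hn => ?_).trans (Multiset.map_id U)
    simp only [Function.comp_apply, Int.toNat_of_nonneg (hU n hn), id_eq]
    ring
  calc S = (S.map fun n => (n + (N : ℤ)).toNat).map (fun c : ℕ => (c : ℤ) - (N : ℤ)) :=
        (h5 S (fun n hn => hmem n (Multiset.mem_add.mpr (Or.inl hn)))).symm
    _ = (T.map fun n => (n + (N : ℤ)).toNat).map (fun c : ℕ => (c : ℤ) - (N : ℤ)) := by rw [h4]
    _ = T := h5 T (fun n hn => hmem n (Multiset.mem_add.mpr (Or.inr hn)))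

open Polynomial in
lemma lin_factor_prod {p : ℕ} (hp : 0 < p) {ζ : ℂ} (hζ : IsPrimitiveRoot ζ p) (c : ℂ) :
    (X - C c) * ∏ k ∈ Finset.range (p - 1), (X - C (ζ ^ (k + 1) * c))
      = X ^ p - C (c ^ p) := by
  obtain ⟨q, rfl⟩ : ∃ q, p = q + 1 := ⟨p - 1, by omega⟩
  rw [X_pow_sub_C_eq_prod hζ hp rfl, Finset.prod_range_succ']
  simp [mul_comm]

open Polynomial in
lemma double_prod {p₁ p₂ : ℕ} (hp₁ : 0 < p₁) (hp₂ : 0 < p₂) {ζ₁ ζ₂ : ℂ}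
    (hζ₁ : IsPrimitiveRoot ζ₁ p₁) (hζ₂ : IsPrimitiveRoot ζ₂ p₂)
    (hcop : Nat.Coprime p₂ p₁) :
    (∏ k₁ ∈ Finset.range (p₁ - 1), ∏ k₂ ∈ Finset.range (p₂ - 1),
        (X - C (ζ₂ ^ (k₂ + 1) * ζ₁ ^ (k₁ + 1)))) * ((X ^ p₁ - 1) * (X ^ p₂ - 1))
      = (X ^ (p₁ * p₂) - 1) * (X - 1) := by
  set Q : ℂ[X] := ∏ k₁ ∈ Finset.range (p₁ - 1), ∏ k₂ ∈ Finset.range (p₂ - 1),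
      (X - C (ζ₂ ^ (k₂ + 1) * ζ₁ ^ (k₁ + 1))) with hQ
  set A : ℂ[X] := ∏ k₁ ∈ Finset.range (p₁ - 1), (X - C (ζ₁ ^ (k₁ + 1))) with hA
  set G : ℂ[X] := ∏ k₁ ∈ Finset.range (p₁ - 1), (X ^ p₂ - C ((ζ₁ ^ p₂) ^ (k₁ + 1))) with hG
  have h1 : (X - 1) * A = X ^ p₁ - 1 := by
    simpa only [mul_one, one_pow, map_one] using lin_factor_prod hp₁ hζ₁ 1
  have h2 : A * Q = G := by
    rw [hA, hQ, hG, ← Finset.prod_mul_distrib]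
    refine Finset.prod_congr rfl fun k₁ _ => ?_
    rw [lin_factor_prod hp₂ hζ₂ (ζ₁ ^ (k₁ + 1)), pow_right_comm]
  have h3 : (X ^ p₂ - 1) * G = X ^ (p₁ * p₂) - 1 := by
    have base := lin_factor_prod hp₁ (hζ₁.pow_of_coprime p₂ hcop) 1
    have := congrArg (aeval (X ^ p₂ : ℂ[X])) base
    simp only [map_mul, map_sub, map_pow, map_prod, aeval_X, aeval_C, map_one,
      algebraMap_eq, one_pow] at this
    rw [hG]
    rw [← pow_mul, mul_comm p₂ p₁] at this
    simpa only [mul_one, ← map_pow] using this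
  rw [← h1, ← h3, ← h2]
  ring

open Polynomial in
lemma triple_prod {p₁ p₂ p₃ : ℕ} (hp₁ : 0 < p₁) (hp₂ : 0 < p₂) (hp₃ : 0 < p₃)
    {ζ₁ ζ₂ ζ₃ : ℂ}
    (hζ₁ : IsPrimitiveRoot ζ₁ p₁) (hζ₂ : IsPrimitiveRoot ζ₂ p₂)
    (hζ₃ : IsPrimitiveRoot ζ₃ p₃)
    (h12 : Nat.Coprime p₁ p₂) (h23 : Nat.Coprime p₂ p₃) (h31 : Nat.Coprime p₃ p₁) :
    (∏ k₁ ∈ Finset.range (p₁ - 1), ∏ k₂ ∈ Finset.range (p₂ - 1),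
        ∏ k₃ ∈ Finset.range (p₃ - 1),
        (X - C (ζ₃ ^ (k₃ + 1) * (ζ₂ ^ (k₂ + 1) * ζ₁ ^ (k₁ + 1))))) *
      ((X ^ (p₁ * p₂) - 1) * (X ^ (p₂ * p₃) - 1) * (X ^ (p₃ * p₁) - 1) * (X - 1))
    = (X ^ (p₁ * p₂ * p₃) - 1) * (X ^ p₁ - 1) * (X ^ p₂ - 1) * (X ^ p₃ - 1) := by
  set P : ℂ[X] := ∏ k₁ ∈ Finset.range (p₁ - 1), ∏ k₂ ∈ Finset.range (p₂ - 1),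
      ∏ k₃ ∈ Finset.range (p₃ - 1),
      (X - C (ζ₃ ^ (k₃ + 1) * (ζ₂ ^ (k₂ + 1) * ζ₁ ^ (k₁ + 1)))) with hP
  set Q : ℂ[X] := ∏ k₁ ∈ Finset.range (p₁ - 1), ∏ k₂ ∈ Finset.range (p₂ - 1),
      (X - C (ζ₂ ^ (k₂ + 1) * ζ₁ ^ (k₁ + 1))) with hQ
  set G : ℂ[X] := ∏ k₁ ∈ Finset.range (p₁ - 1), ∏ k₂ ∈ Finset.range (p₂ - 1),
      (X ^ p₃ - C ((ζ₂ ^ p₃) ^ (k₂ + 1) * (ζ₁ ^ p₃) ^ (k₁ + 1))) with hG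
  have h2 : Q * ((X ^ p₁ - 1) * (X ^ p₂ - 1)) = (X ^ (p₁ * p₂) - 1) * (X - 1) :=
    double_prod hp₁ hp₂ hζ₁ hζ₂ h12.symm
  have hPQ : Q * P = G := by
    rw [hP, hQ, hG, ← Finset.prod_mul_distrib]
    refine Finset.prod_congr rfl fun k₁ _ => ?_
    rw [← Finset.prod_mul_distrib]
    refine Finset.prod_congr rfl fun k₂ _ => ?_
    rw [lin_factor_prod hp₃ hζ₃ (ζ₂ ^ (k₂ + 1) * ζ₁ ^ (k₁ + 1)), mul_pow,
      pow_right_comm, pow_right_comm ζ₁]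
  have h3 : G * ((X ^ (p₃ * p₁) - 1) * (X ^ (p₂ * p₃) - 1))
      = (X ^ (p₁ * p₂ * p₃) - 1) * (X ^ p₃ - 1) := by
    have base := double_prod hp₁ hp₂ (hζ₁.pow_of_coprime p₃ h31)
      (hζ₂.pow_of_coprime p₃ h23.symm) h12.symm
    have key := congrArg (aeval (X ^ p₃ : ℂ[X])) base
    simp only [map_mul, map_sub, map_pow, map_prod, aeval_X, aeval_C, map_one,
      algebraMap_eq, ← pow_mul] at key
    rw [hG, show p₂ * p₃ = p₃ * p₂ by ring,
      show p₁ * p₂ * p₃ = p₃ * (p₁ * p₂) by ring]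
    simp only [map_mul, map_pow, ← pow_mul]
    exact key
  have hne : ((X ^ p₁ - 1) * (X ^ p₂ - 1) : ℂ[X]) ≠ 0 := by
    have h1 : ((X : ℂ[X]) ^ p₁ - 1) ≠ 0 := by
      simpa using X_pow_sub_C_ne_zero hp₁ (1 : ℂ)
    have hb : ((X : ℂ[X]) ^ p₂ - 1) ≠ 0 := by
      simpa using X_pow_sub_C_ne_zero hp₂ (1 : ℂ)
    exact mul_ne_zero h1 hb
  apply mul_right_cancel₀ hne
  linear_combination (-P * (X ^ (p₂ * p₃) - 1) * (X ^ (p₃ * p₁) - 1) * (X ^ p₁ - 1) * (X ^ p₂ - 1)) * h2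
    + ((X ^ (p₂ * p₃) - 1) * (X ^ (p₃ * p₁) - 1) * ((X ^ p₁ - 1) * (X ^ p₂ - 1)) * ((X ^ p₁ - 1) * (X ^ p₂ - 1))) * hPQ
    + (((X ^ p₁ - 1) * (X ^ p₂ - 1)) * ((X ^ p₁ - 1) * (X ^ p₂ - 1))) * h3
/-- The exponent attached to an index triple. -/
def Ez (p₁ p₂ p₃ : ℕ) (k : ℕ × ℕ × ℕ) : ℤ :=
  ((p₂ * p₃ : ℕ) : ℤ) * (k.1 + 1) + ((p₃ * p₁ : ℕ) : ℤ) * (k.2.1 + 1)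
    + ((p₁ * p₂ : ℕ) : ℤ) * (k.2.2 + 1) - ((p₁ * p₂ * p₃ : ℕ) : ℤ)

lemma sum_mul_sum_mul_sum (c : RatFunc ℚ) (s t u : Finset ℕ) (f g h : ℕ → RatFunc ℚ) :
    c * ((∑ i ∈ s, f i) * (∑ j ∈ t, g j) * (∑ l ∈ u, h l))
      = ∑ i ∈ s, ∑ j ∈ t, ∑ l ∈ u, c * (f i * (g j * h l)) := by
  rw [Finset.sum_mul_sum, Finset.sum_mul, Finset.mul_sum]
  refine Finset.sum_congr rfl fun i _ => ?_
  rw [Finset.sum_mul, Finset.mul_sum]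
  refine Finset.sum_congr rfl fun j _ => ?_
  rw [Finset.mul_sum, Finset.mul_sum]
  exact Finset.sum_congr rfl fun l _ => by ring

lemma chiW_eval (p₁ p₂ p₃ : ℕ) (hp₁ : 2 ≤ p₁) (hp₂ : 2 ≤ p₂) (hp₃ : 2 ≤ p₃) :
    chiW 3 ![p₂ * p₃, p₃ * p₁, p₁ * p₂] (p₁ * p₂ * p₃)
      = ∑ k ∈ (Finset.range (p₁ - 1)) ×ˢ ((Finset.range (p₂ - 1)) ×ˢ (Finset.range (p₃ - 1))),
          (RatFunc.X : RatFunc ℚ) ^ (Ez p₁ p₂ p₃ k) := by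
  have h1 : p₁ * p₂ * p₃ - p₂ * p₃ = p₂ * p₃ * (p₁ - 1) := by
    obtain ⟨q, rfl⟩ : ∃ q, p₁ = q + 1 := ⟨p₁ - 1, by omega⟩
    rw [Nat.add_sub_cancel]
    apply Nat.sub_eq_of_eq_add; ring
  have h2 : p₁ * p₂ * p₃ - p₃ * p₁ = p₃ * p₁ * (p₂ - 1) := by
    obtain ⟨q, rfl⟩ : ∃ q, p₂ = q + 1 := ⟨p₂ - 1, by omega⟩
    rw [Nat.add_sub_cancel]
    apply Nat.sub_eq_of_eq_add; ring
  have h3 : p₁ * p₂ * p₃ - p₁ * p₂ = p₁ * p₂ * (p₃ - 1) := by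
    obtain ⟨q, rfl⟩ : ∃ q, p₃ = q + 1 := ⟨p₃ - 1, by omega⟩
    rw [Nat.add_sub_cancel]
    apply Nat.sub_eq_of_eq_add; ring
  unfold chiW
  rw [Fin.prod_univ_three, Fin.sum_univ_three]
  simp only [Matrix.cons_val_zero, Matrix.cons_val_one, Matrix.head_cons,
    Matrix.cons_val_two, Matrix.tail_cons]
  rw [h1, h2, h3, geom_div (by positivity) (p₁ - 1), geom_div (by positivity) (p₂ - 1),
    geom_div (by positivity) (p₃ - 1)]
  rw [Finset.sum_product]
  simp only [Finset.sum_product]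
  rw [sum_mul_sum_mul_sum]
  refine Finset.sum_congr rfl fun k₁ _ => Finset.sum_congr rfl fun k₂ _ =>
    Finset.sum_congr rfl fun k₃ _ => ?_
  rw [← pow_mul, ← pow_mul, ← pow_mul,
    ← zpow_natCast (RatFunc.X : RatFunc ℚ) (p₂ * p₃ * k₁),
    ← zpow_natCast (RatFunc.X : RatFunc ℚ) (p₃ * p₁ * k₂),
    ← zpow_natCast (RatFunc.X : RatFunc ℚ) (p₁ * p₂ * k₃),
    ← zpow_add₀ RatFunc.X_ne_zero, ← zpow_add₀ RatFunc.X_ne_zero,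
    ← zpow_add₀ RatFunc.X_ne_zero]
  congr 1
  unfold Ez
  push_cast
  ring

/-- For pairwise coprime `p₁,p₂,p₃ ≥ 2`, `h = p₁p₂p₃`, and the regular weight
system `W = (p₂p₃, p₃p₁, p₁p₂; h)` with exponents `m₁,…,m_μ`, one has
`∏ⱼ (λ - e^{2πi mⱼ/h}) · (λ^{p₁p₂}-1)(λ^{p₂p₃}-1)(λ^{p₃p₁}-1)(λ-1)
  = (λ^h-1)(λ^{p₁}-1)(λ^{p₂}-1)(λ^{p₃}-1)`. -/
theorem typeI_char_poly (p₁ p₂ p₃ : ℕ)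
    (hp₁ : 2 ≤ p₁) (hp₂ : 2 ≤ p₂) (hp₃ : 2 ≤ p₃)
    (h12 : Nat.Coprime p₁ p₂) (h23 : Nat.Coprime p₂ p₃) (h31 : Nat.Coprime p₃ p₁)
    (μ : ℕ) (m : Fin μ → ℤ)
    (hχ : chiW 3 ![p₂ * p₃, p₃ * p₁, p₁ * p₂] (p₁ * p₂ * p₃)
      = ∑ j, (RatFunc.X : RatFunc ℚ) ^ (m j)) :
    (∏ j, (Polynomial.X - Polynomial.C
        (Complex.exp (2 * Real.pi * Complex.I * (m j : ℂ) / ((p₁ * p₂ * p₃ : ℕ) : ℂ))))) *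
      ((Polynomial.X ^ (p₁ * p₂) - 1) * (Polynomial.X ^ (p₂ * p₃) - 1) *
        (Polynomial.X ^ (p₃ * p₁) - 1) * (Polynomial.X - 1))
    = (Polynomial.X ^ (p₁ * p₂ * p₃) - 1) * (Polynomial.X ^ p₁ - 1) *
        (Polynomial.X ^ p₂ - 1) * ((Polynomial.X ^ p₃ - 1) : Polynomial ℂ) := by
  classical
  have hp₁0 : 0 < p₁ := by omega
  have hp₂0 : 0 < p₂ := by omega
  have hp₃0 : 0 < p₃ := by omega
  set box : Finset (ℕ × ℕ × ℕ) :=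
    (Finset.range (p₁ - 1)) ×ˢ ((Finset.range (p₂ - 1)) ×ˢ (Finset.range (p₃ - 1))) with hboxdef
  -- Step 1: multiset equality of exponents
  have hsum : ((Finset.univ.val.map m).map fun n => (RatFunc.X : RatFunc ℚ) ^ n).sum
      = ((box.val.map (Ez p₁ p₂ p₃)).map fun n => (RatFunc.X : RatFunc ℚ) ^ n).sum := by
    rw [Multiset.map_map, Multiset.map_map]
    have e1 : ∑ j, (RatFunc.X : RatFunc ℚ) ^ (m j)
        = ∑ k ∈ box, (RatFunc.X : RatFunc ℚ) ^ (Ez p₁ p₂ p₃ k) :=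
      hχ.symm.trans (chiW_eval p₁ p₂ p₃ hp₁ hp₂ hp₃)
    exact e1
  have hms : Finset.univ.val.map m = box.val.map (Ez p₁ p₂ p₃) := multiset_int_eq hsum
  -- Step 2: transfer the product
  set f : ℤ → Polynomial ℂ := fun n => Polynomial.X - Polynomial.C
      (Complex.exp (2 * Real.pi * Complex.I * (n : ℂ) / ((p₁ * p₂ * p₃ : ℕ) : ℂ))) with hfdef
  have hprod : (∏ j, f (m j)) = ∏ k ∈ box, f (Ez p₁ p₂ p₃ k) := by
    rw [Finset.prod_eq_multiset_prod, Finset.prod_eq_multiset_prod,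
      show (fun j => f (m j)) = f ∘ m from rfl,
      show (fun k => f (Ez p₁ p₂ p₃ k)) = f ∘ Ez p₁ p₂ p₃ from rfl,
      ← Multiset.map_map, ← Multiset.map_map, hms]
  -- Step 3: identify the roots
  set ζ₁ : ℂ := Complex.exp (2 * Real.pi * Complex.I / (p₁ : ℂ)) with hζ₁def
  set ζ₂ : ℂ := Complex.exp (2 * Real.pi * Complex.I / (p₂ : ℂ)) with hζ₂def
  set ζ₃ : ℂ := Complex.exp (2 * Real.pi * Complex.I / (p₃ : ℂ)) with hζ₃def
  have hζ₁ : IsPrimitiveRoot ζ₁ p₁ := Complex.isPrimitiveRoot_exp p₁ (by omega)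
  have hζ₂ : IsPrimitiveRoot ζ₂ p₂ := Complex.isPrimitiveRoot_exp p₂ (by omega)
  have hζ₃ : IsPrimitiveRoot ζ₃ p₃ := Complex.isPrimitiveRoot_exp p₃ (by omega)
  have hp1c : (p₁ : ℂ) ≠ 0 := Nat.cast_ne_zero.mpr (by omega)
  have hp2c : (p₂ : ℂ) ≠ 0 := Nat.cast_ne_zero.mpr (by omega)
  have hp3c : (p₃ : ℂ) ≠ 0 := Nat.cast_ne_zero.mpr (by omega)
  have hexp : ∀ k : ℕ × ℕ × ℕ, f (Ez p₁ p₂ p₃ k)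
      = Polynomial.X - Polynomial.C (ζ₃ ^ (k.2.2 + 1) * (ζ₂ ^ (k.2.1 + 1) * ζ₁ ^ (k.1 + 1))) := by
    intro k
    simp only [hfdef]
    congr 1
    have harg : 2 * (Real.pi : ℂ) * Complex.I * ((Ez p₁ p₂ p₃ k : ℤ) : ℂ) / ((p₁ * p₂ * p₃ : ℕ) : ℂ)
        = ((k.2.2 + 1 : ℕ) : ℂ) * (2 * Real.pi * Complex.I / (p₃ : ℂ))
          + (((k.2.1 + 1 : ℕ) : ℂ) * (2 * Real.pi * Complex.I / (p₂ : ℂ))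
            + ((k.1 + 1 : ℕ) : ℂ) * (2 * Real.pi * Complex.I / (p₁ : ℂ)))
          + ((-1 : ℤ) : ℂ) * (2 * Real.pi * Complex.I) := by
      unfold Ez
      push_cast
      field_simp
      ring
    rw [harg]
    simp only [Complex.exp_add, Complex.exp_nat_mul, Complex.exp_int_mul_two_pi_mul_I, mul_one]
    rfl
  have hprod2 : (∏ k ∈ box, f (Ez p₁ p₂ p₃ k))
      = ∏ k₁ ∈ Finset.range (p₁ - 1), ∏ k₂ ∈ Finset.range (p₂ - 1),
          ∏ k₃ ∈ Finset.range (p₃ - 1),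
          (Polynomial.X - Polynomial.C (ζ₃ ^ (k₃ + 1) * (ζ₂ ^ (k₂ + 1) * ζ₁ ^ (k₁ + 1)))) := by
    rw [Finset.prod_congr rfl fun k _ => hexp k, hboxdef, Finset.prod_product]
    exact Finset.prod_congr rfl fun k₁ _ => Finset.prod_product _ _ _
  calc (∏ j, f (m j)) *
      ((Polynomial.X ^ (p₁ * p₂) - 1) * (Polynomial.X ^ (p₂ * p₃) - 1) *
        (Polynomial.X ^ (p₃ * p₁) - 1) * (Polynomial.X - 1))
      = (∏ k₁ ∈ Finset.range (p₁ - 1), ∏ k₂ ∈ Finset.range (p₂ - 1),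
          ∏ k₃ ∈ Finset.range (p₃ - 1),
          (Polynomial.X - Polynomial.C (ζ₃ ^ (k₃ + 1) * (ζ₂ ^ (k₂ + 1) * ζ₁ ^ (k₁ + 1))))) *
        ((Polynomial.X ^ (p₁ * p₂) - 1) * (Polynomial.X ^ (p₂ * p₃) - 1) *
          (Polynomial.X ^ (p₃ * p₁) - 1) * (Polynomial.X - 1)) := by
        rw [hprod, hprod2]
    _ = (Polynomial.X ^ (p₁ * p₂ * p₃) - 1) * (Polynomial.X ^ p₁ - 1) *
        (Polynomial.X ^ p₂ - 1) * ((Polynomial.X ^ p₃ - 1) : Polynomial ℂ) := by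
        have := triple_prod hp₁0 hp₂0 hp₃0 hζ₁ hζ₂ hζ₃ h12 h23 h31
        linear_combination this
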